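/- Let ⟨S₁,…,S_k⟩ be a stairwell structure for S ⊆ G × [0,1] with G connected, and fix x ∈ G. Define f: {0,…,k} → {0,1} by f(i) = 1 if i = 0 or i = k or x ∈ σ_{π(βᵢ)}(π(Sᵢ)), and f(i) = 0 otherwise. Then f⁻¹(0) contains no two consecutive integers, and x ∈ π(Sᵢ) if and only if f(i−1) = f(i) = 1. -/

import Mathlib

open Set Topology

/-- A subset of a space is *regular* if it is closed and has finitely many connected
components, each of which is non-degenerate. -/
def IsRegularSet {G : Type*} [TopologicalSpace G] (A : Set G) : Prop :=
  IsClosed A ∧ {C : Set G | ∃ x ∈ A, C = connectedComponentIn A x}.Finite ∧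
    ∀ x ∈ A, (connectedComponentIn A x).Nontrivial

/-- A point of a graph is *ordinary* (neither a branch point nor an endpoint) if it has an
open neighborhood homeomorphic to an open interval. -/
def IsOrdinaryPoint {G : Type*} [TopologicalSpace G] (x : G) : Prop :=
  ∃ U : Set G, IsOpen U ∧ x ∈ U ∧ Nonempty (U ≃ₜ Set.Ioo (0 : ℝ) 1)

/-- A topological space is a *graph* if it is a finite union of arcs which intersect
at most in endpoints. -/
def IsGraphSpace (G : Type*) [TopologicalSpace G] : Prop :=
  ∃ (n : ℕ) (f : Fin n → unitInterval → G),
    (∀ i, Continuous (f i) ∧ Function.Injective (f i)) ∧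
    (⋃ i, Set.range (f i)) = Set.univ ∧
    ∀ i j, i ≠ j →
      Set.range (f i) ∩ Set.range (f j) ⊆ ({f i 0, f i 1} : Set G) ∩ {f j 0, f j 1}

/-- A subset of a space is a *graph* if it is a finite union of arcs which intersect
at most in endpoints. -/
def IsGraphSet {E : Type*} [TopologicalSpace E] (G : Set E) : Prop :=
  ∃ (n : ℕ) (f : Fin n → unitInterval → E),
    (∀ i, Continuous (f i) ∧ Function.Injective (f i)) ∧
    G = ⋃ i, Set.range (f i) ∧
    ∀ i j, i ≠ j →
      Set.range (f i) ∩ Set.range (f j) ⊆ ({f i 0, f i 1} : Set E) ∩ {f j 0, f j 1}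

/-- `φ` restricted to `A` is a homeomorphism onto `B`. -/
def MapsHomeoOnto {F G : Type*} [TopologicalSpace F] [TopologicalSpace G]
    (φ : F → G) (A : Set F) (B : Set G) : Prop :=
  φ '' A = B ∧ Topology.IsEmbedding (A.restrict φ)

/-- A *simple fold* on `G`, with pieces `F1, F2, F3` of `F` and projection `φ : F → G`,
satisfying properties (F1)-(F5). -/
def IsSimpleFold {F G : Type*} [TopologicalSpace F] [TopologicalSpace G]
    (φ : F → G) (F1 F2 F3 : Set F) : Prop :=
  Continuous φ ∧ F1 ∪ F2 ∪ F3 = Set.univ ∧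
  -- (F1)
  ((φ '' F1).Nonempty ∧ (φ '' F2).Nonempty ∧ (φ '' F3).Nonempty) ∧
  (IsRegularSet (φ '' F1) ∧ IsRegularSet (φ '' F2) ∧ IsRegularSet (φ '' F3)) ∧
  -- (F2)
  (φ '' F1) ∪ (φ '' F3) = Set.univ ∧ (φ '' F2) = (φ '' F1) ∩ (φ '' F3) ∧
  -- (F3)
  closure ((φ '' F1) \ (φ '' F2)) ∩ closure ((φ '' F3) \ (φ '' F2)) = ∅ ∧
  -- (F4)
  (MapsHomeoOnto φ F1 (φ '' F1) ∧ MapsHomeoOnto φ F2 (φ '' F2) ∧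
    MapsHomeoOnto φ F3 (φ '' F3)) ∧
  -- (F5)
  frontier (φ '' F1) = φ '' (F1 ∩ F2) ∧ frontier (φ '' F3) = φ '' (F2 ∩ F3) ∧
  F1 ∩ F3 = ∅

/-- `S` separates `A` from `B` within `Y`: the complement `Y \ S` is the union of two
disjoint sets, relatively open in `Y \ S`, containing `A` and `B` respectively. -/
def SeparatesWithin {E : Type*} [TopologicalSpace E] (Y S A B : Set E) : Prop :=
  ∃ U V : Set E,
    U ∪ V = Y \ S ∧ U ∩ V = ∅ ∧ A ⊆ U ∧ B ⊆ V ∧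
    (∃ U', IsOpen U' ∧ U = (Y \ S) ∩ U') ∧ (∃ V', IsOpen V' ∧ V = (Y \ S) ∩ V')

/-- `A` has *consistent complement relative to* `B`: for each component `C` of the
complement of `A`, either `∂C ⊆ B` or `∂C ∩ B = ∅`. -/
def ConsistentComplement {G : Type*} [TopologicalSpace G] (A B : Set G) : Prop :=
  ∀ x ∉ A, frontier (connectedComponentIn Aᶜ x) ⊆ B ∨
    frontier (connectedComponentIn Aᶜ x) ∩ B = ∅

/-- The *`A` side of `B`*, `σ_B(A)`: the closure of the union of all components of
`G \ B` meeting `A`. -/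
def sideOf {G : Type*} [TopologicalSpace G] (B A : Set G) : Set G :=
  closure (⋃ x ∈ {x : G | x ∉ B ∧ (connectedComponentIn Bᶜ x ∩ A).Nonempty},
    connectedComponentIn Bᶜ x)

/-- A subset of `G × [0,1]` is *straight* if it is closed, the projection is injective on
it, and its projection is regular. -/
def IsStraight {G : Type*} [TopologicalSpace G] (S : Set (G × unitInterval)) : Prop :=
  IsClosed S ∧ Set.InjOn Prod.fst S ∧ IsRegularSet (Prod.fst '' S)

/-- The *end set* of a straight set. -/
def endSet {G : Type*} [TopologicalSpace G] (S : Set (G × unitInterval)) :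
    Set (G × unitInterval) :=
  S ∩ Prod.fst ⁻¹' (frontier (Prod.fst '' S))

/-- A *stairwell structure* of height `k` for `S ⊆ G × [0,1]`, given by the pieces
`Sp 1, …, Sp k` with end set decompositions `E(Sp i) = α i ∪ β i`. -/
def IsStairwell {G : Type*} [TopologicalSpace G]
    (Sp α β : ℕ → Set (G × unitInterval)) (k : ℕ) (S : Set (G × unitInterval)) : Prop :=
  1 ≤ k ∧
  -- (S1)
  (∀ i ∈ Set.Icc 1 k, (Sp i).Nonempty ∧ IsStraight (Sp i)) ∧
  S = ⋃ i ∈ Set.Icc 1 k, Sp i ∧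
  -- (S2)
  (∀ i ∈ Set.Icc 1 k, endSet (Sp i) = α i ∪ β i ∧ α i ∩ β i = ∅ ∧
    (α i).Finite ∧ (β i).Finite) ∧
  α 1 = ∅ ∧ β k = ∅ ∧ (∀ i, 1 ≤ i → i < k → β i = α (i + 1)) ∧
  -- (S3)
  (∀ i, 1 ≤ i → i < k → ∃ V : Set G, IsOpen V ∧ Prod.fst '' β i ⊆ V ∧
    Prod.fst '' Sp i ∩ V = Prod.fst '' Sp (i + 1) ∩ V) ∧
  -- (S4)
  (∀ i ∈ Set.Icc 1 k, ConsistentComplement (Prod.fst '' Sp i) (Prod.fst '' α i) ∧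
    ConsistentComplement (Prod.fst '' Sp i) (Prod.fst '' β i)) ∧
  -- (S5)
  (∀ i ∈ Set.Icc 2 k, ∀ p ∈ α i, IsOrdinaryPoint p.1) ∧
  (∀ i j, 2 ≤ i → i < j → j ≤ k → Prod.fst '' α i ∩ Prod.fst '' α j = ∅)

/-- A *broken stairwell structure* of height `k` with a pit at level `i0`. -/
def IsBrokenStairwell {G : Type*} [TopologicalSpace G]
    (Sp α β : ℕ → Set (G × unitInterval)) (γ P1 P2 : Set (G × unitInterval))
    (k i0 : ℕ) (S : Set (G × unitInterval)) : Prop :=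
  1 ≤ k ∧ 1 ≤ i0 ∧ i0 ≤ k ∧
  -- (S1')
  (∀ i ∈ Set.Icc 1 k, (Sp i).Nonempty ∧ IsStraight (Sp i)) ∧
  P1.Nonempty ∧ IsStraight P1 ∧ P2.Nonempty ∧ IsStraight P2 ∧
  S = (⋃ i ∈ Set.Icc 1 k, Sp i) ∪ P1 ∪ P2 ∧
  -- (S2')
  (∀ i ∈ Set.Icc 1 k, i ≠ i0 → endSet (Sp i) = α i ∪ β i) ∧
  endSet (Sp i0) = α i0 ∪ β i0 ∪ γ ∧
  (∀ i ∈ Set.Icc 1 k, α i ∩ β i = ∅ ∧ (α i).Finite ∧ (β i).Finite) ∧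
  γ.Finite ∧ α i0 ∩ γ = ∅ ∧ β i0 ∩ γ = ∅ ∧
  α 1 = ∅ ∧ β k = ∅ ∧ (∀ i, 1 ≤ i → i < k → β i = α (i + 1)) ∧
  endSet P2 = endSet P1 ∪ γ ∧ endSet P1 ∩ γ = ∅ ∧
  -- (S3')
  (∀ i, 1 ≤ i → i < k → ∃ V : Set G, IsOpen V ∧ Prod.fst '' β i ⊆ V ∧
    Prod.fst '' Sp i ∩ V = Prod.fst '' Sp (i + 1) ∩ V) ∧
  (∃ V : Set G, IsOpen V ∧ Prod.fst '' endSet P1 ⊆ V ∧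
    Prod.fst '' P1 ∩ V = Prod.fst '' P2 ∩ V) ∧
  (∃ W : Set G, IsOpen W ∧ Prod.fst '' γ ⊆ W ∧
    Prod.fst '' P2 ∩ W = Prod.fst '' Sp i0 ∩ W) ∧
  -- (S4')
  (∀ i ∈ Set.Icc 1 k, ConsistentComplement (Prod.fst '' Sp i) (Prod.fst '' α i) ∧
    ConsistentComplement (Prod.fst '' Sp i) (Prod.fst '' β i)) ∧
  ConsistentComplement (Prod.fst '' Sp i0) (Prod.fst '' γ) ∧
  ConsistentComplement (Prod.fst '' P2) (Prod.fst '' endSet P1) ∧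
  ConsistentComplement (Prod.fst '' P2) (Prod.fst '' γ) ∧
  -- (S5')
  (∀ i ∈ Set.Icc 2 k, ∀ p ∈ α i, IsOrdinaryPoint p.1) ∧
  (∀ p ∈ endSet P1, IsOrdinaryPoint p.1) ∧ (∀ p ∈ γ, IsOrdinaryPoint p.1) ∧
  (∀ i j, 2 ≤ i → i < j → j ≤ k → Prod.fst '' α i ∩ Prod.fst '' α j = ∅) ∧
  (∀ i ∈ Set.Icc 2 k, Prod.fst '' α i ∩ Prod.fst '' endSet P1 = ∅ ∧
    Prod.fst '' α i ∩ Prod.fst '' γ = ∅) ∧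
  Prod.fst '' endSet P1 ∩ Prod.fst '' γ = ∅ ∧
  -- (S6')
  Prod.fst '' α i0 ∩ Prod.fst '' (P1 ∪ P2) = ∅

/-- A compactum is *hereditarily indecomposable* if every non-degenerate subcontinuum is
indecomposable, i.e. is not the union of two proper subcontinua. -/
def HereditarilyIndecomposable (X : Type*) [TopologicalSpace X] : Prop :=
  ∀ K : Set X, IsCompact K → IsConnected K → K.Nontrivial →
    ¬ ∃ A B : Set X, IsCompact A ∧ IsConnected A ∧ IsCompact B ∧ IsConnected B ∧
      A ∪ B = K ∧ A ≠ K ∧ B ≠ K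

/-- A continuum is *arc-like* if for every `ε > 0` it admits an `ε`-map onto `[0,1]`. -/
def ArcLike (X : Type*) [MetricSpace X] : Prop :=
  ∀ ε > (0 : ℝ), ∃ f : X → unitInterval, Continuous f ∧ Function.Surjective f ∧
    ∀ y, Metric.diam (f ⁻¹' {y}) < ε

/-- A continuum has *span zero* if every subcontinuum `Z ⊆ X × X` with
`π₁(Z) ⊆ π₂(Z)` meets the diagonal. -/
def SpanZero (X : Type*) [TopologicalSpace X] : Prop :=
  ∀ Z : Set (X × X), IsCompact Z → IsConnected Z →
    Prod.fst '' Z ⊆ Prod.snd '' Z → ∃ x, (x, x) ∈ Z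

section AuxLemmas

variable {G : Type*} [TopologicalSpace G]

lemma closure_ccIn_inter {s : Set G} {x : G} :
    closure (connectedComponentIn s x) ∩ s ⊆ connectedComponentIn s x := by
  by_cases hx : x ∈ s
  · rw [connectedComponentIn_eq_image hx]
    rintro y ⟨hy1, hy2⟩
    have h1 : (⟨y, hy2⟩ : s) ∈ closure (connectedComponent (⟨x, hx⟩ : s)) := by
      rw [closure_subtype]; exact hy1
    have h2 := isClosed_connectedComponent.closure_subset h1
    exact ⟨⟨y, hy2⟩, h2, rfl⟩
  · rw [connectedComponentIn_eq_empty hx]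
    simp

lemma frontier_ccIn_subset [LocallyConnectedSpace G] {A : Set G} (hA : IsClosed A) (x : G) :
    frontier (connectedComponentIn Aᶜ x) ⊆ frontier A := by
  have hCopen : IsOpen (connectedComponentIn Aᶜ x) := hA.isOpen_compl.connectedComponentIn
  rw [hCopen.frontier_eq]
  rintro y ⟨hy1, hy2⟩
  have hyA : y ∈ A := by
    by_contra hyA
    exact hy2 (closure_ccIn_inter ⟨hy1, hyA⟩)
  have hyc : y ∈ closure Aᶜ :=
    closure_mono (connectedComponentIn_subset _ _) hy1
  rw [frontier_eq_closure_inter_closure, hA.closure_eq]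
  exact ⟨hyA, hyc⟩

lemma mem_closure_diff_finite [T1Space G] {C F : Set G} (hC : IsPreconnected C)
    (hnt : C.Nontrivial) (hF : F.Finite) {x : G} (hx : x ∈ C) : x ∈ closure (C \ F) := by
  rw [mem_closure_iff]
  intro o ho hxo
  set o' : Set G := o ∩ ((F \ {x})ᶜ) with ho'def
  have ho' : IsOpen o' := ho.inter ((hF.diff (t := _)).isClosed).isOpen_compl
  have hxo' : x ∈ o' := ⟨hxo, by simp⟩
  -- x is not isolated in C
  obtain ⟨y0, hy0C, hy0x⟩ := hnt.exists_ne x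
  have key : (C ∩ (o' ∩ {x}ᶜ)).Nonempty := by
    apply hC o' {x}ᶜ ho' isOpen_compl_singleton
    · intro z hz
      by_cases hzx : z = x
      · exact Or.inl (hzx ▸ hxo')
      · exact Or.inr hzx
    · exact ⟨x, hx, hxo'⟩
    · exact ⟨y0, hy0C, hy0x⟩
  obtain ⟨z, hzC, hzo', hzx⟩ := key
  refine ⟨z, hzo'.1, hzC, ?_⟩
  intro hzF
  exact hzo'.2 ⟨hzF, hzx⟩

lemma subset_sideOf [T1Space G] {A B : Set G} (hB : B.Finite)
    (hreg : ∀ x ∈ A, (connectedComponentIn A x).Nontrivial) :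
    A ⊆ sideOf B A := by
  intro x hx
  have hx' : x ∈ connectedComponentIn A x := mem_connectedComponentIn hx
  have h1 : x ∈ closure (connectedComponentIn A x \ B) :=
    mem_closure_diff_finite isPreconnected_connectedComponentIn (hreg x hx) hB hx'
  refine closure_mono ?_ h1
  rintro y ⟨hyC, hyB⟩
  have hyA : y ∈ A := connectedComponentIn_subset _ _ hyC
  have hyB' : y ∈ (Bᶜ : Set G) := hyB
  exact mem_biUnion (show y ∈ {z : G | z ∉ B ∧ (connectedComponentIn Bᶜ z ∩ A).Nonempty} from
    ⟨hyB, ⟨y, mem_connectedComponentIn hyB', hyA⟩⟩) (mem_connectedComponentIn hyB')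

lemma sideOf_empty [ConnectedSpace G] {A : Set G} (hA : A.Nonempty) :
    sideOf (∅ : Set G) A = univ := by
  obtain ⟨a, ha⟩ := hA
  have hcc : connectedComponentIn ((∅ : Set G)ᶜ) a = univ := by
    rw [compl_empty, connectedComponentIn_univ,
      PreconnectedSpace.connectedComponent_eq_univ]
  apply eq_univ_of_univ_subset
  refine subset_trans ?_ subset_closure
  intro z _
  exact mem_biUnion (show a ∈ {w : G | w ∉ (∅ : Set G) ∧
    (connectedComponentIn (∅ : Set G)ᶜ w ∩ A).Nonempty} from
    ⟨notMem_empty a, by rw [hcc]; exact ⟨a, mem_univ a, ha⟩⟩) (by rw [hcc]; trivial)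

end AuxLemmas
section AuxLemmas2

variable {G : Type*} [TopologicalSpace G]

lemma ccIn_compl_ne_univ [PreconnectedSpace G] [LocallyConnectedSpace G]
    {A : Set G} (hA : IsClosed A) (hAne : A.Nonempty) {x : G} (hx : x ∉ A) :
    frontier (connectedComponentIn Aᶜ x) ≠ ∅ := by
  intro hfr
  have hclopen : IsClopen (connectedComponentIn Aᶜ x) :=
    isClopen_iff_frontier_eq_empty.mpr hfr
  rcases isClopen_iff.mp hclopen with h | h
  · have : x ∈ connectedComponentIn Aᶜ x := mem_connectedComponentIn hx
    rw [h] at this; exact this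
  · obtain ⟨a, ha⟩ := hAne
    have : a ∈ (Aᶜ : Set G) := by
      have := connectedComponentIn_subset (Aᶜ : Set G) x
      rw [h] at this
      exact this (mem_univ a)
    exact this ha

lemma frontier_ccIn_subset_self [LocallyConnectedSpace G]
    {A : Set G} (hA : IsClosed A) (x : G) :
    frontier (connectedComponentIn Aᶜ x) ⊆ A := by
  intro y hy
  have h := frontier_ccIn_subset hA x hy
  rw [frontier_eq_closure_inter_closure, hA.closure_eq] at h
  exact h.1

lemma closure_ccIn_eq [LocallyConnectedSpace G] {A : Set G} (hA : IsClosed A) (x : G) :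
    closure (connectedComponentIn Aᶜ x)
      = connectedComponentIn Aᶜ x ∪ frontier (connectedComponentIn Aᶜ x) := by
  have hCopen : IsOpen (connectedComponentIn Aᶜ x) := hA.isOpen_compl.connectedComponentIn
  rw [hCopen.frontier_eq]
  rw [union_diff_self, union_eq_self_of_subset_left subset_closure]

lemma mem_sideOf_of_frontier_disjoint [ConnectedSpace G] [LocallyConnectedSpace G]
    {A s : Set G} (hA : IsClosed A) (hAne : A.Nonempty) (hsA : s ⊆ A) {x : G} (hx : x ∉ A)
    (hdisj : frontier (connectedComponentIn Aᶜ x) ∩ s = ∅) : x ∈ sideOf s A := by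
  obtain ⟨y, hy⟩ := nonempty_iff_ne_empty.mpr (ccIn_compl_ne_univ hA hAne hx)
  have hyA : y ∈ A := frontier_ccIn_subset_self hA x hy
  have hclos : closure (connectedComponentIn Aᶜ x) ⊆ sᶜ := by
    rw [closure_ccIn_eq hA x]
    rintro z (hz | hz)
    · intro hzs
      exact (connectedComponentIn_subset _ _ hz) (hsA hzs)
    · intro hzs
      have : z ∈ frontier (connectedComponentIn Aᶜ x) ∩ s := ⟨hz, hzs⟩
      rw [hdisj] at this
      exact this
  have hxs : x ∉ s := fun h => hx (hsA h)
  have hxC : x ∈ closure (connectedComponentIn Aᶜ x) :=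
    subset_closure (mem_connectedComponentIn hx)
  have hsubD : closure (connectedComponentIn Aᶜ x) ⊆ connectedComponentIn sᶜ x :=
    (isPreconnected_connectedComponentIn.closure).subset_connectedComponentIn hxC hclos
  have hyclos : y ∈ closure (connectedComponentIn Aᶜ x) := by
    rw [closure_ccIn_eq hA x]; exact Or.inr hy
  have hyD : y ∈ connectedComponentIn sᶜ x := hsubD hyclos
  refine subset_closure ?_
  exact mem_biUnion (show x ∈ {z : G | z ∉ s ∧ (connectedComponentIn sᶜ z ∩ A).Nonempty} from
    ⟨hxs, ⟨y, hyD, hyA⟩⟩) (mem_connectedComponentIn hxs)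

lemma not_mem_sideOf_of_frontier_subset [LocallyConnectedSpace G]
    {A s : Set G} (hA : IsClosed A) (hs : IsClosed s) (hsA : s ⊆ A) {x : G} (hx : x ∉ A)
    (hsub : frontier (connectedComponentIn Aᶜ x) ⊆ s) : x ∉ sideOf s A := by
  set C := connectedComponentIn Aᶜ x with hCdef
  have hCopen : IsOpen C := hA.isOpen_compl.connectedComponentIn
  have hxC : x ∈ C := mem_connectedComponentIn hx
  have hCA : C ∩ A = ∅ := by
    rw [eq_empty_iff_forall_notMem]
    rintro w ⟨hw1, hw2⟩
    exact (connectedComponentIn_subset _ _ hw1) hw2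
  intro hmem
  rw [sideOf, mem_closure_iff] at hmem
  obtain ⟨q, hqC, hqU⟩ := hmem C hCopen hxC
  rw [mem_iUnion₂] at hqU
  obtain ⟨z, ⟨hzs, hzA⟩, hq⟩ := hqU
  -- connectedComponentIn sᶜ z ⊆ C, contradicting hzA
  have hclosC : closure C ∩ sᶜ ⊆ C := by
    rw [closure_ccIn_eq hA x]
    rintro w ⟨(hw | hw), hws⟩
    · exact hw
    · exact absurd (hsub hw) hws
  have hvopen : IsOpen (sᶜ ∩ (closure C)ᶜ) := hs.isOpen_compl.inter isClosed_closure.isOpen_compl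
  have hdisj2 : Disjoint C (sᶜ ∩ (closure C)ᶜ) := by
    rw [Set.disjoint_left]
    rintro w hw1 ⟨_, hw2⟩
    exact hw2 (subset_closure hw1)
  have hcover : connectedComponentIn sᶜ z ⊆ C ∪ (sᶜ ∩ (closure C)ᶜ) := by
    intro w hw
    have hws : w ∈ (sᶜ : Set G) := connectedComponentIn_subset _ _ hw
    by_cases hwc : w ∈ closure C
    · exact Or.inl (hclosC ⟨hwc, hws⟩)
    · exact Or.inr ⟨hws, hwc⟩
  have hCsub : C ⊆ (sᶜ : Set G) := fun w hw hws =>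
    (connectedComponentIn_subset _ _ hw) (hsA hws)
  have hkey : connectedComponentIn sᶜ z ⊆ C :=
    IsPreconnected.subset_left_of_subset_union hCopen hvopen hdisj2 hcover
      ⟨q, hq, hqC⟩ isPreconnected_connectedComponentIn
  obtain ⟨w, hw1, hw2⟩ := hzA
  have : w ∈ C ∩ A := ⟨hkey hw1, hw2⟩
  rw [hCA] at this
  exact this

lemma mem_sideOf_or [ConnectedSpace G] [LocallyConnectedSpace G] [T1Space G]
    {A a b : Set G} (hA : IsClosed A) (hAne : A.Nonempty)
    (hreg : ∀ x ∈ A, (connectedComponentIn A x).Nontrivial)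
    (ha : a.Finite) (haA : a ⊆ A) (hbA : b ⊆ A) (hab : a ∩ b = ∅)
    (hfr : frontier A ⊆ a ∪ b) (hcc : ConsistentComplement A a)
    (x : G) : x ∈ sideOf a A ∨ x ∈ sideOf b A := by
  by_cases hx : x ∈ A
  · exact Or.inl (subset_sideOf ha hreg hx)
  · have hfrC : frontier (connectedComponentIn Aᶜ x) ⊆ a ∪ b :=
      (frontier_ccIn_subset hA x).trans hfr
    rcases hcc x hx with h | h
    · right
      apply mem_sideOf_of_frontier_disjoint hA hAne hbA hx
      rw [eq_empty_iff_forall_notMem]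
      rintro w ⟨hw1, hw2⟩
      have : w ∈ a ∩ b := ⟨h hw1, hw2⟩
      rw [hab] at this
      exact this
    · exact Or.inl (mem_sideOf_of_frontier_disjoint hA hAne haA hx h)

lemma sideOf_inter_subset [ConnectedSpace G] [LocallyConnectedSpace G] [T1Space G]
    {A a b : Set G} (hA : IsClosed A) (hAne : A.Nonempty)
    (ha : a.Finite) (hb : b.Finite) (haA : a ⊆ A) (hbA : b ⊆ A)
    (hfr : frontier A ⊆ a ∪ b)
    (hcca : ConsistentComplement A a) (hccb : ConsistentComplement A b) :
    sideOf a A ∩ sideOf b A ⊆ A := by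
  rintro x ⟨hxa, hxb⟩
  by_contra hx
  have hfrC : frontier (connectedComponentIn Aᶜ x) ⊆ a ∪ b :=
    (frontier_ccIn_subset hA x).trans hfr
  rcases hcca x hx with h1 | h1
  · exact not_mem_sideOf_of_frontier_subset hA ha.isClosed haA hx h1 hxa
  rcases hccb x hx with h2 | h2
  · exact not_mem_sideOf_of_frontier_subset hA hb.isClosed hbA hx h2 hxb
  have hfr0 : frontier (connectedComponentIn Aᶜ x) = ∅ := by
    rw [eq_empty_iff_forall_notMem]
    intro w hw
    rcases hfrC hw with hwa | hwb
    · have hmem2 : w ∈ frontier (connectedComponentIn Aᶜ x) ∩ a := ⟨hw, hwa⟩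
      rw [h1] at hmem2; exact hmem2
    · have hmem2 : w ∈ frontier (connectedComponentIn Aᶜ x) ∩ b := ⟨hw, hwb⟩
      rw [h2] at hmem2; exact hmem2
  exact ccIn_compl_ne_univ hA hAne hx hfr0

end AuxLemmas2
section AuxLemmas3

variable {G : Type*} [TopologicalSpace G]

lemma ordinary_sides {y : G} (hy : IsOrdinaryPoint y) {W : Set G}
    (hW : IsOpen W) (hyW : y ∈ W) :
    ∃ U L R : Set G, IsOpen U ∧ y ∈ U ∧ U ⊆ W ∧ IsOpen L ∧ IsOpen R ∧
      IsPreconnected L ∧ IsPreconnected R ∧ U \ {y} = L ∪ R ∧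
      y ∈ closure L ∧ y ∈ closure R ∧ y ∉ L ∧ y ∉ R := by
  obtain ⟨U₀, hU₀, hyU₀, ⟨h⟩⟩ := hy
  set t : Ioo (0:ℝ) 1 := h ⟨y, hyU₀⟩ with htdef
  -- the open subset of `Ioo 0 1` corresponding to `W`
  have himg : IsOpen (h '' ((fun p : U₀ => (p : G)) ⁻¹' W)) :=
    h.isOpenMap _ (hW.preimage continuous_subtype_val)
  obtain ⟨Ω', hΩ'open, hΩ'⟩ := isOpen_induced_iff.mp himg
  have htΩ : (t : ℝ) ∈ Ω' ∩ Ioo (0:ℝ) 1 := by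
    constructor
    · have : t ∈ h '' ((fun p : U₀ => (p : G)) ⁻¹' W) := ⟨⟨y, hyU₀⟩, hyW, rfl⟩
      rw [← hΩ'] at this
      exact this
    · exact t.2
  obtain ⟨ε, hε, hball⟩ := Metric.isOpen_iff.mp (hΩ'open.inter isOpen_Ioo) _ htΩ
  rw [Real.ball_eq_Ioo] at hball
  set e : Ioo (0:ℝ) 1 → G := fun s => ((h.symm s : U₀) : G) with hedef
  have hecont : Continuous e := continuous_subtype_val.comp h.symm.continuous
  have heinj : Function.Injective e := Subtype.val_injective.comp h.symm.injective
  have heopen : ∀ K : Set (Ioo (0:ℝ) 1), IsOpen K → IsOpen (e '' K) := by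
    intro K hK
    have h1 : IsOpen (h.symm '' K) := h.symm.isOpenMap _ hK
    have h2 : e '' K = Subtype.val '' (h.symm '' K) := by
      rw [Set.image_image]
    rw [h2]
    exact hU₀.isOpenMap_subtype_val _ h1
  have hety : e t = y := by
    rw [hedef]; simp [htdef]
  set Jf : Set ℝ := Ioo ((t:ℝ) - ε) ((t:ℝ) + ε) with hJf
  set Jl : Set ℝ := Ioo ((t:ℝ) - ε) (t:ℝ) with hJl
  set Jr : Set ℝ := Ioo (t:ℝ) ((t:ℝ) + ε) with hJr
  set Kf : Set (Ioo (0:ℝ) 1) := Subtype.val ⁻¹' Jf with hKf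
  set Kl : Set (Ioo (0:ℝ) 1) := Subtype.val ⁻¹' Jl with hKl
  set Kr : Set (Ioo (0:ℝ) 1) := Subtype.val ⁻¹' Jr with hKr
  have hKfo : IsOpen Kf := isOpen_Ioo.preimage continuous_subtype_val
  have hKlo : IsOpen Kl := isOpen_Ioo.preimage continuous_subtype_val
  have hKro : IsOpen Kr := isOpen_Ioo.preimage continuous_subtype_val
  have hJl01 : Jl ⊆ Ioo (0:ℝ) 1 := fun s hs => (hball ⟨hs.1, lt_trans hs.2 (by linarith)⟩).2
  have hJr01 : Jr ⊆ Ioo (0:ℝ) 1 := fun s hs => (hball ⟨lt_trans (by linarith) hs.1, hs.2⟩).2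
  have hvKl : Subtype.val '' Kl = Jl := by
    rw [hKl, Set.image_preimage_eq_inter_range, Subtype.range_val]
    exact inter_eq_self_of_subset_left hJl01
  have hvKr : Subtype.val '' Kr = Jr := by
    rw [hKr, Set.image_preimage_eq_inter_range, Subtype.range_val]
    exact inter_eq_self_of_subset_left hJr01
  have hKlpre : IsPreconnected Kl := by
    have := IsInducing.subtypeVal.isPreconnected_image (s := Kl)
    rw [hvKl] at this
    exact this.mp isPreconnected_Ioo
  have hKrpre : IsPreconnected Kr := by
    have := IsInducing.subtypeVal.isPreconnected_image (s := Kr)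
    rw [hvKr] at this
    exact this.mp isPreconnected_Ioo
  refine ⟨e '' Kf, e '' Kl, e '' Kr, heopen _ hKfo, ?_, ?_, heopen _ hKlo, heopen _ hKro,
    hKlpre.image e hecont.continuousOn, hKrpre.image e hecont.continuousOn, ?_, ?_, ?_, ?_, ?_⟩
  · exact ⟨t, by simp [hKf, hJf, hε], hety⟩
  · -- e '' Kf ⊆ W
    rintro w ⟨s, hs, rfl⟩
    have hsΩ : (s : ℝ) ∈ Ω' := (hball hs).1
    have : s ∈ h '' ((fun p : U₀ => (p : G)) ⁻¹' W) := by rw [← hΩ']; exact hsΩ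
    obtain ⟨u, hu, huh⟩ := this
    have h2 : h.symm s = u := by rw [← huh]; exact h.symm_apply_apply u
    show ((h.symm s : U₀) : G) ∈ W
    rw [h2]
    exact hu
  · -- e '' Kf \ {y} = e '' Kl ∪ e '' Kr
    have hsplit : Kf \ {t} = Kl ∪ Kr := by
      ext s
      simp only [mem_diff, mem_singleton_iff, mem_union, hKf, hKl, hKr, mem_preimage,
        hJf, hJl, hJr, mem_Ioo]
      constructor
      · rintro ⟨⟨h1, h2⟩, h3⟩
        have hne : (s : ℝ) ≠ (t : ℝ) := fun hc => h3 (Subtype.ext hc)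
        rcases hne.lt_or_gt with hlt | hlt
        · exact Or.inl ⟨h1, hlt⟩
        · exact Or.inr ⟨hlt, h2⟩
      · rintro (⟨h1, h2⟩ | ⟨h1, h2⟩)
        · exact ⟨⟨h1, by linarith⟩, fun hc => absurd (congrArg Subtype.val hc) (ne_of_lt h2)⟩
        · exact ⟨⟨by linarith, h2⟩, fun hc => absurd (congrArg Subtype.val hc) (ne_of_gt h1)⟩
    rw [← hety, ← Set.image_singleton, ← Set.image_diff heinj, hsplit, Set.image_union]
  · -- y ∈ closure (e '' Kl)
    have ht1 : t ∈ closure Kl := by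
      rw [closure_subtype, hvKl, hJl, closure_Ioo (by linarith : (t:ℝ) - ε ≠ (t:ℝ))]
      exact ⟨by linarith, le_refl _⟩
    rw [← hety]
    exact image_closure_subset_closure_image hecont ⟨t, ht1, rfl⟩
  · have ht1 : t ∈ closure Kr := by
      rw [closure_subtype, hvKr, hJr, closure_Ioo (by linarith : (t:ℝ) ≠ (t:ℝ) + ε)]
      exact ⟨le_refl _, by linarith⟩
    rw [← hety]
    exact image_closure_subset_closure_image hecont ⟨t, ht1, rfl⟩
  · rintro ⟨s, hs, hes⟩
    have : s = t := heinj (hes.trans hety.symm)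
    rw [this] at hs
    exact absurd hs.2 (lt_irrefl _)
  · rintro ⟨s, hs, hes⟩
    have : s = t := heinj (hes.trans hety.symm)
    rw [this] at hs
    exact absurd hs.1 (lt_irrefl _)

end AuxLemmas3
section AuxLemmas4

variable {G : Type*} [TopologicalSpace G]

lemma side_at_accum {z : G} (hz : IsOrdinaryPoint z) {X W₀ : Set G}
    (hW₀ : IsOpen W₀) (hzW₀ : z ∈ W₀) (hzX : z ∈ closure X) (hzXn : z ∉ X) :
    ∃ S : Set G, IsOpen S ∧ IsPreconnected S ∧ S ⊆ W₀ \ {z} ∧ z ∈ closure S ∧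
      (S ∩ X).Nonempty := by
  obtain ⟨U, L, R, hUo, hzU, hUW, hLo, hRo, hLp, hRp, hsplit, hclL, hclR, _, _⟩ :=
    ordinary_sides hz hW₀ hzW₀
  obtain ⟨q, hqU, hqX⟩ := mem_closure_iff.mp hzX U hUo hzU
  have hqz : q ≠ z := fun hc => hzXn (hc ▸ hqX)
  have hq2 : q ∈ L ∪ R := by rw [← hsplit]; exact ⟨hqU, hqz⟩
  have hLsub : L ⊆ W₀ \ {z} := fun u hu => by
    have : u ∈ U \ {z} := by rw [hsplit]; exact Or.inl hu
    exact ⟨hUW this.1, this.2⟩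
  have hRsub : R ⊆ W₀ \ {z} := fun u hu => by
    have : u ∈ U \ {z} := by rw [hsplit]; exact Or.inr hu
    exact ⟨hUW this.1, this.2⟩
  rcases hq2 with hq | hq
  · exact ⟨L, hLo, hLp, hLsub, hclL, ⟨q, hq, hqX⟩⟩
  · exact ⟨R, hRo, hRp, hRsub, hclR, ⟨q, hq, hqX⟩⟩

lemma preconn_subset_compl_of_avoid_frontier {A S : Set G} (hSp : IsPreconnected S)
    (hSfr : ∀ u ∈ S, u ∉ frontier A) {q : G} (hq : q ∈ S) (hqA : q ∉ A) : S ⊆ Aᶜ := by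
  have hcov : S ⊆ interior A ∪ (closure A)ᶜ := by
    intro u hu
    by_cases huc : u ∈ closure A
    · by_cases hui : u ∈ interior A
      · exact Or.inl hui
      · exact absurd ⟨huc, hui⟩ (hSfr u hu)
    · exact Or.inr huc
  have hdisj : Disjoint (interior A) ((closure A)ᶜ) := by
    rw [Set.disjoint_left]
    intro u hu hc
    exact hc (subset_closure (interior_subset hu))
  have hqcl : q ∈ (closure A)ᶜ := fun hc => hSfr q hq ⟨hc, fun hi => hqA (interior_subset hi)⟩
  have := hSp.subset_right_of_subset_union isOpen_interior isClosed_closure.isOpen_compl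
    hdisj hcov ⟨q, hq, hqcl⟩
  exact this.trans (compl_subset_compl.mpr subset_closure)

lemma preconn_subset_of_avoid_frontier {A S : Set G} (hSp : IsPreconnected S)
    (hSfr : ∀ u ∈ S, u ∉ frontier A) {q : G} (hq : q ∈ S) (hqA : q ∈ A) : S ⊆ A := by
  have hcov : S ⊆ interior A ∪ (closure A)ᶜ := by
    intro u hu
    by_cases huc : u ∈ closure A
    · by_cases hui : u ∈ interior A
      · exact Or.inl hui
      · exact absurd ⟨huc, hui⟩ (hSfr u hu)
    · exact Or.inr huc
  have hdisj : Disjoint (interior A) ((closure A)ᶜ) := by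
    rw [Set.disjoint_left]
    intro u hu hc
    exact hc (subset_closure (interior_subset hu))
  have hqi : q ∈ interior A := by
    by_contra hqi
    exact hSfr q hq ⟨subset_closure hqA, hqi⟩
  have := hSp.subset_left_of_subset_union isOpen_interior isClosed_closure.isOpen_compl
    hdisj hcov ⟨q, hq, hqi⟩
  exact this.trans interior_subset

lemma side_transfer_aux [ConnectedSpace G] [LocallyConnectedSpace G] [T1Space G]
    {A A' a b V : Set G} (hA : IsClosed A) (hA'ne : A'.Nonempty)
    (ha : a.Finite) (hb : b.Finite) (hbA : b ⊆ A) (hbA' : b ⊆ A')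
    (hab : a ∩ b = ∅) (hfr : frontier A ⊆ a ∪ b)
    (hord : ∀ z ∈ a ∪ b, IsOrdinaryPoint z)
    (hccb : ConsistentComplement A b)
    (hV : IsOpen V) (hbV : b ⊆ V) (hagree : A ∩ V = A' ∩ V)
    {x : G} (hx : x ∉ b) (hmeet : (connectedComponentIn bᶜ x ∩ A).Nonempty) :
    (connectedComponentIn bᶜ x ∩ A').Nonempty := by
  rcases eq_empty_or_nonempty b with hbe | hbne
  · subst hbe
    rw [compl_empty, connectedComponentIn_univ, PreconnectedSpace.connectedComponent_eq_univ,
      univ_inter]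
    exact hA'ne
  by_contra hDA'
  rw [not_nonempty_iff_eq_empty] at hDA'
  set D := connectedComponentIn bᶜ x with hDdef
  have hbcl : IsClosed b := hb.isClosed
  have hDo : IsOpen D := hbcl.isOpen_compl.connectedComponentIn
  have hDb : D ⊆ (bᶜ : Set G) := connectedComponentIn_subset _ _
  obtain ⟨w, hwD, hwA⟩ := hmeet
  have hDmax : ∀ S : Set G, IsPreconnected S → S ⊆ (bᶜ : Set G) → (S ∩ D).Nonempty → S ⊆ D := by
    rintro S hSp hSb ⟨p, hpS, hpD⟩
    have h1 : connectedComponentIn bᶜ x = connectedComponentIn bᶜ p := connectedComponentIn_eq hpD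
    rw [hDdef, h1]
    exact hSp.subset_connectedComponentIn hpS hSb
  set T' : Set G := ⋃ z ∈ {z : G | z ∉ A ∧ z ∈ D ∧
      frontier (connectedComponentIn Aᶜ z) ⊆ b}, connectedComponentIn Aᶜ z with hT'def
  have hT'o : IsOpen T' := isOpen_biUnion fun z _ => hA.isOpen_compl.connectedComponentIn
  have hT'A : T' ⊆ (Aᶜ : Set G) := iUnion₂_subset fun z _ => connectedComponentIn_subset _ _
  -- KEY claim: points of D in the closure of T' are in T' (and not in A)
  have hKEY : ∀ z ∈ D, z ∈ closure T' → z ∉ A ∧ z ∈ T' := by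
    intro z hzD hzcl
    by_cases hzA : z ∈ A
    · exfalso
      have hzb : z ∉ b := hDb hzD
      by_cases hzi : z ∈ interior A
      · obtain ⟨q, hqi, hqT⟩ := mem_closure_iff.mp hzcl _ isOpen_interior hzi
        exact (hT'A hqT) (interior_subset hqi)
      · have hzfr : z ∈ frontier A := by rw [hA.frontier_eq]; exact ⟨hzA, hzi⟩
        have hza : z ∈ a := by
          rcases hfr hzfr with h | h
          · exact h
          · exact absurd h hzb
        set W₀ : Set G := (((a ∪ b) \ {z})ᶜ : Set G) with hW₀def
        have hW₀o : IsOpen W₀ := (((ha.union hb).diff (t := _)).isClosed).isOpen_compl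
        have hzW₀ : z ∈ W₀ := fun hc => hc.2 rfl
        have hzT'n : z ∉ T' := fun hc => (hT'A hc) hzA
        obtain ⟨S, _, hSp, hSsub, hzS, ⟨q, hqS, hqT'⟩⟩ :=
          side_at_accum (hord z (Or.inl hza)) hW₀o hzW₀ hzcl hzT'n
        have hSfr : ∀ u ∈ S, u ∉ frontier A := by
          intro u huS hufr
          exact (hSsub huS).1 ⟨hfr hufr, (hSsub huS).2⟩
        have hSA : S ⊆ (Aᶜ : Set G) :=
          preconn_subset_compl_of_avoid_frontier hSp hSfr hqS (hT'A hqT')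
        obtain ⟨z', hz', hqcc⟩ := mem_iUnion₂.mp hqT'
        have hccq : connectedComponentIn Aᶜ z' = connectedComponentIn Aᶜ q :=
          connectedComponentIn_eq hqcc
        have hScc : S ⊆ connectedComponentIn Aᶜ q :=
          hSp.subset_connectedComponentIn hqS hSA
        have hzfrF : z ∈ frontier (connectedComponentIn Aᶜ q) := by
          rw [(hA.isOpen_compl.connectedComponentIn).frontier_eq]
          exact ⟨closure_mono hScc hzS,
            fun hc => (connectedComponentIn_subset _ _ hc) hzA⟩
        have hzb' : z ∈ b := by
          rw [← hccq] at hzfrF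
          exact hz'.2.2 hzfrF
        have : z ∈ a ∩ b := ⟨hza, hzb'⟩
        rw [hab] at this
        exact this
    · refine ⟨hzA, ?_⟩
      have hF₀o : IsOpen (connectedComponentIn Aᶜ z) := hA.isOpen_compl.connectedComponentIn
      obtain ⟨q, hqF₀, hqT'⟩ := mem_closure_iff.mp hzcl _ hF₀o (mem_connectedComponentIn hzA)
      obtain ⟨z', hz', hqcc⟩ := mem_iUnion₂.mp hqT'
      have h1 : connectedComponentIn Aᶜ z' = connectedComponentIn Aᶜ q :=
        connectedComponentIn_eq hqcc
      have h2 : connectedComponentIn Aᶜ z = connectedComponentIn Aᶜ q :=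
        connectedComponentIn_eq hqF₀
      refine mem_biUnion (show z ∈ {z : G | z ∉ A ∧ z ∈ D ∧
        frontier (connectedComponentIn Aᶜ z) ⊆ b} from ⟨hzA, hzD, ?_⟩)
        (mem_connectedComponentIn hzA)
      rw [h2, ← h1]
      exact hz'.2.2
  -- the closure of D must meet b
  have hclDb : (closure D ∩ b).Nonempty := by
    by_contra hc
    rw [not_nonempty_iff_eq_empty] at hc
    have h1 : closure D ⊆ (bᶜ : Set G) := fun u hu hub => by
      have : u ∈ closure D ∩ b := ⟨hu, hub⟩
      rw [hc] at this
      exact this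
    have hxD : x ∈ D := mem_connectedComponentIn hx
    have hclD : closure D ⊆ D := hDmax _ isPreconnected_connectedComponentIn.closure h1
      ⟨x, subset_closure hxD, hxD⟩
    have hclop : IsClopen D := ⟨isClosed_of_closure_subset hclD, hDo⟩
    rcases isClopen_iff.mp hclop with h | h
    · rw [h] at hxD; exact hxD
    · obtain ⟨yb, hyb⟩ := hbne
      exact (hDb (h ▸ mem_univ yb)) hyb
  obtain ⟨y, hyclD, hyb⟩ := hclDb
  set W₁ : Set G := (V ∩ ((a ∪ b) \ {y})ᶜ : Set G) with hW₁def
  have hW₁o : IsOpen W₁ := hV.inter (((ha.union hb).diff (t := _)).isClosed).isOpen_compl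
  have hyW₁ : y ∈ W₁ := ⟨hbV hyb, fun hc => hc.2 rfl⟩
  have hyD : y ∉ D := fun hc => (hDb hc) hyb
  obtain ⟨S, _, hSp, hSsub, hyS, ⟨p, hpS, hpD⟩⟩ :=
    side_at_accum (hord y (Or.inr hyb)) hW₁o hyW₁ hyclD hyD
  have hSb : S ⊆ (bᶜ : Set G) := fun u hu hub =>
    (hSsub hu).1.2 ⟨Or.inr hub, (hSsub hu).2⟩
  have hSD : S ⊆ D := hDmax S hSp hSb ⟨p, hpS, hpD⟩
  have hSfr : ∀ u ∈ S, u ∉ frontier A := by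
    intro u huS hufr
    exact (hSsub huS).1.2 ⟨hfr hufr, (hSsub huS).2⟩
  by_cases hpA : p ∈ A
  · -- S ⊆ A, so p ∈ A ∩ V = A' ∩ V, giving D ∩ A' nonempty
    have hpV : p ∈ V := (hSsub hpS).1.1
    have hpAV : p ∈ A ∩ V := ⟨hpA, hpV⟩
    rw [hagree] at hpAV
    have : p ∈ D ∩ A' := ⟨hpD, hpAV.1⟩
    rw [hDA'] at this
    exact this
  · -- S ⊆ Aᶜ, get a b-gap F inside D, then connectedness contradiction
    have hSA : S ⊆ (Aᶜ : Set G) := preconn_subset_compl_of_avoid_frontier hSp hSfr hpS hpA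
    have hScc : S ⊆ connectedComponentIn Aᶜ p := hSp.subset_connectedComponentIn hpS hSA
    have hyfrF : y ∈ frontier (connectedComponentIn Aᶜ p) := by
      rw [(hA.isOpen_compl.connectedComponentIn).frontier_eq]
      exact ⟨closure_mono hScc hyS,
        fun hc => (connectedComponentIn_subset _ _ hc) (hbA hyb)⟩
    rcases hccb p hpA with hFb | hFb
    · -- frontier F ⊆ b : p ∈ T'
      have hFD : connectedComponentIn Aᶜ p ⊆ D := hDmax _ isPreconnected_connectedComponentIn
        (fun u hu hub => (connectedComponentIn_subset _ _ hu) (hbA hub))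
        ⟨p, mem_connectedComponentIn hpA, hpD⟩
      have hpT' : p ∈ T' := mem_biUnion (show p ∈ {z : G | z ∉ A ∧ z ∈ D ∧
        frontier (connectedComponentIn Aᶜ z) ⊆ b} from ⟨hpA, hpD, hFb⟩)
        (mem_connectedComponentIn hpA)
      have hcov : D ⊆ T' ∪ ((closure T')ᶜ : Set G) := by
        intro z hz
        by_cases hzc : z ∈ closure T'
        · exact Or.inl (hKEY z hz hzc).2
        · exact Or.inr hzc
      have hw2 : w ∈ ((closure T')ᶜ : Set G) := fun hc => (hKEY w hwD hc).1 hwA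
      obtain ⟨u, _, hu1, hu2⟩ := isPreconnected_connectedComponentIn (x := x) (F := (bᶜ : Set G))
        T' ((closure T')ᶜ) hT'o isClosed_closure.isOpen_compl hcov
        ⟨p, hpD, hpT'⟩ ⟨w, hwD, hw2⟩
      exact hu2 (subset_closure hu1)
    · -- frontier F ∩ b = ∅, contradicted by y
      have : y ∈ frontier (connectedComponentIn Aᶜ p) ∩ b := ⟨hyfrF, hyb⟩
      rw [hFb] at this
      exact this

end AuxLemmas4
section AuxLemmas5

variable {G : Type*} [TopologicalSpace G]

lemma sideOf_subset_of_transfer {b A A' : Set G}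
    (h : ∀ x, x ∉ b → (connectedComponentIn bᶜ x ∩ A).Nonempty →
      (connectedComponentIn bᶜ x ∩ A').Nonempty) :
    sideOf b A ⊆ sideOf b A' := by
  apply closure_mono
  refine iUnion₂_subset fun z hz => ?_
  exact subset_biUnion_of_mem (show z ∈ {w : G | w ∉ b ∧
    (connectedComponentIn bᶜ w ∩ A').Nonempty} from ⟨hz.1, h z hz.1 hz.2⟩)

lemma isOpen_of_closed_cover {ι : Type*} [Finite ι] {R : ι → Set G} (hR : ∀ i, IsClosed (R i))
    (hcov : ⋃ i, R i = univ) {W : Set G}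
    (h : ∀ i, ∃ Vi : Set G, IsOpen Vi ∧ W ∩ R i = Vi ∩ R i) :
    IsOpen W := by
  choose Vi hVio hVi using h
  rw [← isClosed_compl_iff]
  have hWc : Wᶜ = ⋃ i, (R i ∩ (Vi i)ᶜ) := by
    ext u
    simp only [mem_compl_iff, mem_iUnion, mem_inter_iff]
    constructor
    · intro hu
      have : u ∈ ⋃ i, R i := by rw [hcov]; trivial
      obtain ⟨i, hi⟩ := mem_iUnion.mp this
      refine ⟨i, hi, fun hv => ?_⟩
      have : u ∈ W ∩ R i := by rw [hVi i]; exact ⟨hv, hi⟩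
      exact hu this.1
    · rintro ⟨i, hi, hv⟩ hu
      have : u ∈ Vi i ∩ R i := by rw [← hVi i]; exact ⟨hu, hi⟩
      exact hv this.1
  rw [hWc]
  exact isClosed_iUnion_of_finite fun i => (hR i).inter (hVio i).isClosed_compl

lemma IsGraphSpace.locallyConnectedSpace [CompactSpace G] [T2Space G]
    (hG : IsGraphSpace G) : LocallyConnectedSpace G := by
  classical
  obtain ⟨n, f, hf, hcov, hint⟩ := hG
  rw [locallyConnectedSpace_iff_connected_subsets]
  intro x U hU
  obtain ⟨O, hOU, hO, hxO⟩ := mem_nhds_iff.mp hU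
  have hembed : ∀ i, IsClosedEmbedding (f i) := fun i =>
    (hf i).1.isClosedEmbedding (hf i).2
  have hRclosed : ∀ i, IsClosed (range (f i)) := fun i => (hembed i).isClosed_range
  set E : Set G := ⋃ i, ({f i 0, f i 1} : Set G) with hE
  have hEfin : E.Finite := finite_iUnion fun i => (finite_singleton _).insert _
  set Jx : Set (Fin n) := {i | x ∈ range (f i)} with hJx
  set Bad : Set G := (⋃ i ∈ Jxᶜ, range (f i)) ∪ (E \ {x}) with hBad
  have hBadc : IsClosed Bad :=
    ((Set.toFinite (Jxᶜ)).isClosed_biUnion fun i _ => hRclosed i).union (hEfin.diff (t := _)).isClosed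
  have hxBad : x ∉ Bad := by
    rintro (h | h)
    · rw [mem_iUnion₂] at h
      obtain ⟨i, hi, hxi⟩ := h
      exact hi hxi
    · exact h.2 rfl
  set O' : Set G := O ∩ Badᶜ with hO'
  have hO'o : IsOpen O' := hO.inter hBadc.isOpen_compl
  have hxO' : x ∈ O' := ⟨hxO, hxBad⟩
  have hpiece : ∀ i ∈ Jx, ∃ K : Set unitInterval, IsOpen K ∧ IsPreconnected K ∧
      (∃ t, f i t = x ∧ t ∈ K) ∧ f i '' K ⊆ O' := by
    intro i hi
    obtain ⟨t, ht⟩ := hi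
    have hPo : IsOpen ((f i) ⁻¹' O') := hO'o.preimage (hf i).1
    have htP : t ∈ (f i) ⁻¹' O' := by rw [mem_preimage, ht]; exact hxO'
    obtain ⟨P', hP'o, hP'⟩ := isOpen_induced_iff.mp hPo
    have htP' : (t : ℝ) ∈ P' := by rw [← hP'] at htP; exact htP
    obtain ⟨ε, hε, hball⟩ := Metric.isOpen_iff.mp hP'o _ htP'
    rw [Real.ball_eq_Ioo] at hball
    refine ⟨Subtype.val ⁻¹' Ioo ((t:ℝ) - ε) ((t:ℝ) + ε),
      isOpen_Ioo.preimage continuous_subtype_val, ?_, ⟨t, ht, by simp [hε]⟩, ?_⟩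
    · have h1 : IsPreconnected (Subtype.val ''
          (Subtype.val ⁻¹' Ioo ((t:ℝ) - ε) ((t:ℝ) + ε) : Set unitInterval)) := by
        rw [Set.image_preimage_eq_inter_range, Subtype.range_val]
        exact (Set.ordConnected_Ioo.inter Set.ordConnected_Icc).isPreconnected
      exact (IsInducing.subtypeVal.isPreconnected_image).mp h1
    · rintro u ⟨s, hs, rfl⟩
      have : s ∈ Subtype.val ⁻¹' P' := hball hs
      rw [hP'] at this
      exact this
  choose K hKo hKp hKt hKO using hpiece
  set W : Set G := ⋃ (i) (h : i ∈ Jx), f i '' K i h with hW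
  have hJne : x ∈ ⋃ i, range (f i) := by rw [hcov]; trivial
  obtain ⟨i₀, hi₀⟩ := mem_iUnion.mp hJne
  have hxW : x ∈ W := by
    rw [hW, mem_iUnion]
    refine ⟨i₀, mem_iUnion.mpr ⟨hi₀, ?_⟩⟩
    obtain ⟨t, ht, htK⟩ := hKt i₀ hi₀
    exact ⟨t, htK, ht⟩
  have hWO' : W ⊆ O' := by
    refine iUnion_subset fun i => iUnion_subset fun h => hKO i h
  -- preconnectedness
  have hWp : IsPreconnected W := by
    have : W = ⋃₀ {S : Set G | ∃ (i : Fin n) (h : i ∈ Jx), S = f i '' K i h} := by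
      ext u
      simp only [hW, mem_iUnion, mem_sUnion, mem_setOf_eq]
      constructor
      · rintro ⟨i, h, hu⟩
        exact ⟨f i '' K i h, ⟨i, h, rfl⟩, hu⟩
      · rintro ⟨S, ⟨i, h, rfl⟩, hu⟩
        exact ⟨i, h, hu⟩
    rw [this]
    apply isPreconnected_sUnion x
    · rintro S ⟨i, h, rfl⟩
      obtain ⟨t, ht, htK⟩ := hKt i h
      exact ⟨t, htK, ht⟩
    · rintro S ⟨i, h, rfl⟩
      exact (hKp i h).image _ (hf i).1.continuousOn
  -- openness
  have hWopen : IsOpen W := by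
    apply isOpen_of_closed_cover hRclosed hcov
    intro l
    by_cases hl : l ∈ Jx
    · refine ⟨(f l '' (K l hl)ᶜ)ᶜ, ((hembed l).isClosedMap _ (hKo l hl).isClosed_compl).isOpen_compl, ?_⟩
      ext u
      constructor
      · rintro ⟨huW, huR⟩
        refine ⟨?_, huR⟩
        rintro ⟨s, hs, rfl⟩
        obtain ⟨i, hmem⟩ := mem_iUnion.mp huW
        obtain ⟨hi, hui⟩ := mem_iUnion.mp hmem
        by_cases hil : i = l
        · subst hil
          obtain ⟨s', hs', he⟩ := hui
          exact hs ((hf i).2 he ▸ hs')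
        · have huE : f l s ∈ ({f i 0, f i 1} : Set G) ∩ {f l 0, f l 1} := by
            apply hint i l hil
            obtain ⟨s', _, he⟩ := hui
            exact ⟨⟨s', he⟩, ⟨s, rfl⟩⟩
          have huE' : f l s ∈ E := by
            rw [hE, mem_iUnion]
            exact ⟨l, huE.2⟩
          have hux : f l s = x := by
            by_contra hne
            exact (hWO' huW).2 (Or.inr ⟨huE', hne⟩)
          obtain ⟨t, ht, htK⟩ := hKt l hl
          have : s = t := (hf l).2 (hux.trans ht.symm)
          exact hs (this ▸ htK)
      · rintro ⟨huV, ⟨s, rfl⟩⟩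
        have hsK : s ∈ K l hl := by
          by_contra hsn
          exact huV ⟨s, hsn, rfl⟩
        refine ⟨?_, ⟨s, rfl⟩⟩
        rw [hW, mem_iUnion]
        exact ⟨l, mem_iUnion.mpr ⟨hl, ⟨s, hsK, rfl⟩⟩⟩
    · refine ⟨∅, isOpen_empty, ?_⟩
      rw [empty_inter, eq_empty_iff_forall_notMem]
      rintro u ⟨huW, huR⟩
      exact (hWO' huW).2 (Or.inl (mem_biUnion hl huR))
  exact ⟨W, hWopen.mem_nhds hxW, hWp, (hWO'.trans (inter_subset_left)).trans hOU⟩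

end AuxLemmas5
/-- the key parity claim in the proof that odd stairwells separate. -/
theorem stmt17 (G : Type*) [TopologicalSpace G] [CompactSpace G] [T2Space G]
    [ConnectedSpace G] (hG : IsGraphSpace G)
    (S : Set (G × unitInterval)) (Sp α β : ℕ → Set (G × unitInterval)) (k : ℕ)
    (h : IsStairwell Sp α β k S) (x : G) :
    (∀ i < k, (i = 0 ∨ i = k ∨ x ∈ sideOf (Prod.fst '' β i) (Prod.fst '' Sp i)) ∨
      (i + 1 = 0 ∨ i + 1 = k ∨
        x ∈ sideOf (Prod.fst '' β (i + 1)) (Prod.fst '' Sp (i + 1)))) ∧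
    (∀ i ∈ Set.Icc 1 k, (x ∈ Prod.fst '' Sp i ↔
      ((i - 1 = 0 ∨ i - 1 = k ∨
        x ∈ sideOf (Prod.fst '' β (i - 1)) (Prod.fst '' Sp (i - 1))) ∧
       (i = 0 ∨ i = k ∨ x ∈ sideOf (Prod.fst '' β i) (Prod.fst '' Sp i))))) := by
  haveI : LocallyConnectedSpace G := hG.locallyConnectedSpace
  obtain ⟨hk1, hS1, hSdef, hS2, hα1, hβk, hβα, hS3, hS4, hS5, hgen⟩ := h
  have hstraight : ∀ i ∈ Set.Icc 1 k, IsStraight (Sp i) := fun i hi => (hS1 i hi).2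
  have hclosed : ∀ i ∈ Set.Icc 1 k, IsClosed (Prod.fst '' Sp i) :=
    fun i hi => (hstraight i hi).2.2.1
  have hreg : ∀ i ∈ Set.Icc 1 k, ∀ y ∈ Prod.fst '' Sp i,
      (connectedComponentIn (Prod.fst '' Sp i) y).Nontrivial :=
    fun i hi => (hstraight i hi).2.2.2.2
  have hinj : ∀ i ∈ Set.Icc 1 k, Set.InjOn Prod.fst (Sp i) :=
    fun i hi => (hstraight i hi).2.1
  have hne : ∀ i ∈ Set.Icc 1 k, (Prod.fst '' Sp i).Nonempty :=
    fun i hi => (hS1 i hi).1.image _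
  have hαsub : ∀ i ∈ Set.Icc 1 k, α i ⊆ Sp i := by
    intro i hi p hp
    have h2 : p ∈ endSet (Sp i) := by rw [(hS2 i hi).1]; exact Or.inl hp
    exact h2.1
  have hβsub : ∀ i ∈ Set.Icc 1 k, β i ⊆ Sp i := by
    intro i hi p hp
    have h2 : p ∈ endSet (Sp i) := by rw [(hS2 i hi).1]; exact Or.inr hp
    exact h2.1
  have hαfin : ∀ i ∈ Set.Icc 1 k, (Prod.fst '' α i).Finite :=
    fun i hi => ((hS2 i hi).2.2.1).image _
  have hβfin : ∀ i ∈ Set.Icc 1 k, (Prod.fst '' β i).Finite :=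
    fun i hi => ((hS2 i hi).2.2.2).image _
  have hαsub' : ∀ i ∈ Set.Icc 1 k, Prod.fst '' α i ⊆ Prod.fst '' Sp i :=
    fun i hi => image_mono (hαsub i hi)
  have hβsub' : ∀ i ∈ Set.Icc 1 k, Prod.fst '' β i ⊆ Prod.fst '' Sp i :=
    fun i hi => image_mono (hβsub i hi)
  have hfrA : ∀ i ∈ Set.Icc 1 k, frontier (Prod.fst '' Sp i)
      = Prod.fst '' α i ∪ Prod.fst '' β i := by
    intro i hi
    have h1 : Prod.fst '' endSet (Sp i) = Prod.fst '' Sp i ∩ frontier (Prod.fst '' Sp i) :=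
      Set.image_inter_preimage _ _ _
    have h2 : frontier (Prod.fst '' Sp i) ⊆ Prod.fst '' Sp i := by
      rw [(hclosed i hi).frontier_eq]
      exact diff_subset
    rw [(hS2 i hi).1, Set.image_union, inter_eq_self_of_subset_right h2] at h1
    exact h1.symm
  have hdisjαβ : ∀ i ∈ Set.Icc 1 k, Prod.fst '' α i ∩ Prod.fst '' β i = ∅ := by
    intro i hi
    rw [eq_empty_iff_forall_notMem]
    rintro u ⟨⟨p, hp, hpu⟩, ⟨q, hq, hqu⟩⟩
    have hpq : p = q := hinj i hi (hαsub i hi hp) (hβsub i hi hq) (hpu.trans hqu.symm)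
    have : p ∈ α i ∩ β i := ⟨hp, hpq ▸ hq⟩
    rw [(hS2 i hi).2.1] at this
    exact this
  -- ordinariness of α-points (for i ≥ 1, using α 1 = ∅)
  have hordα : ∀ i, 1 ≤ i → i ≤ k → ∀ z ∈ Prod.fst '' α i, IsOrdinaryPoint z := by
    intro i hi1 hik z hz
    obtain ⟨p, hp, rfl⟩ := hz
    rcases eq_or_lt_of_le hi1 with he | hlt
    · rw [← he, hα1] at hp
      exact absurd hp (notMem_empty p)
    · exact hS5 i ⟨hlt, hik⟩ p hp
  have hordβ : ∀ i, 1 ≤ i → i ≤ k → ∀ z ∈ Prod.fst '' β i, IsOrdinaryPoint z := by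
    intro i hi1 hik z hz
    obtain ⟨p, hp, rfl⟩ := hz
    rcases eq_or_lt_of_le hik with he | hlt
    · rw [he, hβk] at hp
      exact absurd hp (notMem_empty p)
    · exact hS5 (i+1) ⟨by omega, by omega⟩ p ((hβα i hi1 hlt) ▸ hp)
  -- the transfer lemma
  have htrans : ∀ j, 1 ≤ j → j < k →
      sideOf (Prod.fst '' β j) (Prod.fst '' Sp j)
        = sideOf (Prod.fst '' β j) (Prod.fst '' Sp (j+1)) := by
    intro j hj1 hjk
    obtain ⟨V, hVo, hbV, hagree⟩ := hS3 j hj1 hjk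
    have hj : j ∈ Set.Icc 1 k := ⟨hj1, le_of_lt hjk⟩
    have hj1' : j + 1 ∈ Set.Icc 1 k := ⟨by omega, by omega⟩
    have hβα' : β j = α (j+1) := hβα j hj1 hjk
    have hbA' : Prod.fst '' β j ⊆ Prod.fst '' Sp (j+1) := by
      rw [hβα']; exact hαsub' (j+1) hj1'
    apply Set.Subset.antisymm
    · apply sideOf_subset_of_transfer
      intro z hz hmeet
      refine side_transfer_aux (A := Prod.fst '' Sp j) (a := Prod.fst '' α j)
        (hclosed j hj) (hne (j+1) hj1') (hαfin j hj) (hβfin j hj)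
        (hβsub' j hj) hbA' (hdisjαβ j hj) (le_of_eq (hfrA j hj)) ?_
        ((hS4 j hj).2) hVo hbV hagree hz hmeet
      rintro w (hw | hw)
      · exact hordα j hj1 hj.2 w hw
      · exact hordβ j hj1 hj.2 w hw
    · apply sideOf_subset_of_transfer
      intro z hz hmeet
      refine side_transfer_aux (A := Prod.fst '' Sp (j+1)) (a := Prod.fst '' β (j+1))
        (hclosed (j+1) hj1') (hne j hj) (hβfin (j+1) hj1') (hβfin j hj)
        hbA' (hβsub' j hj) ?_ ?_ ?_ ?_ hVo hbV hagree.symm hz hmeet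
      · rw [hβα']
        rw [inter_comm]
        exact hdisjαβ (j+1) hj1'
      · rw [hfrA (j+1) hj1', hβα', union_comm]
      · rintro w (hw | hw)
        · exact hordβ (j+1) hj1'.1 hj1'.2 w hw
        · exact hordβ j hj1 hj.2 w hw
      · rw [hβα']
        exact (hS4 (j+1) hj1').1
  -- membership characterization
  have hmemiff : ∀ i ∈ Set.Icc 1 k, (x ∈ Prod.fst '' Sp i ↔
      (x ∈ sideOf (Prod.fst '' α i) (Prod.fst '' Sp i) ∧
       x ∈ sideOf (Prod.fst '' β i) (Prod.fst '' Sp i))) := by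
    intro i hi
    constructor
    · intro hx
      exact ⟨subset_sideOf (hαfin i hi) (hreg i hi) hx,
        subset_sideOf (hβfin i hi) (hreg i hi) hx⟩
    · rintro ⟨h1, h2⟩
      exact sideOf_inter_subset (hclosed i hi) (hne i hi) (hαfin i hi) (hβfin i hi)
        (hαsub' i hi) (hβsub' i hi) (le_of_eq (hfrA i hi))
        ((hS4 i hi).1) ((hS4 i hi).2) ⟨h1, h2⟩
  have hor : ∀ i ∈ Set.Icc 1 k,
      x ∈ sideOf (Prod.fst '' α i) (Prod.fst '' Sp i) ∨
      x ∈ sideOf (Prod.fst '' β i) (Prod.fst '' Sp i) := by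
    intro i hi
    exact mem_sideOf_or (hclosed i hi) (hne i hi) (hreg i hi) (hαfin i hi)
      (hαsub' i hi) (hβsub' i hi) (hdisjαβ i hi) (le_of_eq (hfrA i hi))
      ((hS4 i hi).1) x
  have hσa1 : sideOf (Prod.fst '' α 1) (Prod.fst '' Sp 1) = univ := by
    rw [hα1, image_empty]
    exact sideOf_empty (hne 1 ⟨le_refl 1, hk1⟩)
  have hσbk : sideOf (Prod.fst '' β k) (Prod.fst '' Sp k) = univ := by
    rw [hβk, image_empty]
    exact sideOf_empty (hne k ⟨hk1, le_refl k⟩)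
  constructor
  · -- part 1
    intro i hik
    rcases Nat.eq_zero_or_pos i with h0 | h1
    · exact Or.inl (Or.inl h0)
    have hi1 : i + 1 ∈ Set.Icc 1 k := ⟨by omega, by omega⟩
    rcases hor (i+1) hi1 with hm | hm
    · left; right; right
      have hβα' : β i = α (i+1) := hβα i h1 hik
      have ht := htrans i h1 hik
      rw [hβα'] at ht ⊢
      rw [ht]
      exact hm
    · exact Or.inr (Or.inr (Or.inr hm))
  · -- part 2
    intro i hi
    have hi1' : 1 ≤ i := hi.1
    have hik' : i ≤ k := hi.2
    have e2 : (i = 0 ∨ i = k ∨ x ∈ sideOf (Prod.fst '' β i) (Prod.fst '' Sp i))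
        ↔ x ∈ sideOf (Prod.fst '' β i) (Prod.fst '' Sp i) := by
      constructor
      · rintro (h0 | hk0 | hm)
        · omega
        · rw [hk0, hσbk]; trivial
        · exact hm
      · exact fun hm => Or.inr (Or.inr hm)
    have e1 : (i - 1 = 0 ∨ i - 1 = k ∨
        x ∈ sideOf (Prod.fst '' β (i-1)) (Prod.fst '' Sp (i-1)))
        ↔ x ∈ sideOf (Prod.fst '' α i) (Prod.fst '' Sp i) := by
      rcases eq_or_lt_of_le hi.1 with h1 | h2
      · constructor
        · intro _
          rw [← h1, hσa1]
          trivial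
        · intro _
          left
          omega
      · have hi1 : 1 ≤ i - 1 := by omega
        have hik : i - 1 < k := by omega
        have heq : i - 1 + 1 = i := by omega
        have hβα' : β (i-1) = α i := by
          have := hβα (i-1) hi1 hik
          rw [heq] at this
          exact this
        have ht := htrans (i-1) hi1 hik
        rw [heq, hβα'] at ht
        constructor
        · rintro (h0 | hk0 | hm)
          · omega
          · omega
          · rw [hβα'] at hm
            rw [← ht]
            exact hm
        · intro hm
          refine Or.inr (Or.inr ?_)
          rw [hβα', ht]
          exact hm
    exact (hmemiff i hi).trans (and_congr e1 e2).symm
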